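/- Suppose P is a real n×n×n tensor lying in 𝒟(ℂ), the GL(n,ℂ)³-orbit of the diagonal tensor D. Then, up to a simultaneous permutation of the rows of the three matrices, P can be uniquely expressed as P = D(g₁,g₂,g₃) with g₁,g₂,g₃ ∈ GL(n,ℂ) subject to: (i) the first non-zero entry of every row of g₁ and of g₂ equals 1; and (ii) for some k ≤ n/2, the first 2k rows of each g_i are non-real and not purely imaginary, occurring in complex conjugate pairs (row 2j being the conjugate of row 2j−1 for j = 1,…,k), and the remaining n−2k rows of each g_i are real. Consequently P has a unique decomposition into n complex rank-1 summands, of which 2k are non-real, occurring in conjugate pairs, and n−2k are real. -/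

import Mathlib

open scoped BigOperators
open Matrix

/-- An `n×n×n` tensor with entries in `K`. -/
abbrev Tensor (n : ℕ) (K : Type*) := Fin n × Fin n × Fin n → K

namespace Tensor

variable {n : ℕ} {K : Type*}

section CommRing
variable [CommRing K]

/-- The right action of a triple of `n×n` matrices on an `n×n×n` tensor:
`(P(g₁,g₂,g₃))_{ijk} = Σ_{a,b,c} P_{abc} g₁(a,i) g₂(b,j) g₃(c,k)`. -/
def act (P : Tensor n K) (g₁ g₂ g₃ : Matrix (Fin n) (Fin n) K) : Tensor n K :=
  fun x => ∑ a, ∑ b, ∑ c, P (a, b, c) * g₁ a x.1 * g₂ b x.2.1 * g₃ c x.2.2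

/-- The diagonal tensor `D`, with `D_{iii} = 1` and all other entries `0`. -/
def DT (n : ℕ) (K : Type*) [CommRing K] : Tensor n K :=
  fun x => if x.1 = x.2.1 ∧ x.2.1 = x.2.2 then 1 else 0

/-- The orbit of the diagonal tensor `D` under `GL(n,K)×GL(n,K)×GL(n,K)`. -/
def orbitD (n : ℕ) (K : Type*) [CommRing K] : Set (Tensor n K) :=
  {P | ∃ g₁ g₂ g₃ : Matrix (Fin n) (Fin n) K,
    IsUnit g₁.det ∧ IsUnit g₂.det ∧ IsUnit g₃.det ∧ P = (DT n K).act g₁ g₂ g₃}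

/-- `P` admits a decomposition as a sum of `r` rank-one tensors. -/
def HasRankLE (P : Tensor n K) (r : ℕ) : Prop :=
  ∃ u v w : Fin r → Fin n → K, P = fun x => ∑ l, u l x.1 * v l x.2.1 * w l x.2.2

/-- The tensor rank of `P`: the smallest `r` such that `P` is a sum of `r` rank-one tensors. -/
noncomputable def rank (P : Tensor n K) : ℕ := sInf {r | P.HasRankLE r}

/-- The three flattenings of `P` to an `n²×n` matrix; the columns of `flatten i P` are
indexed by the `i`-th index of `P`. -/
def flatten (i : Fin 3) (P : Tensor n K) : Matrix (Fin n × Fin n) (Fin n) K :=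
  ![Matrix.of fun p a => P (a, p.1, p.2),
    Matrix.of fun p b => P (p.1, b, p.2),
    Matrix.of fun p c => P (p.1, p.2, c)] i

/-- Contraction `P *_i v` of the `i`-th index of `P` against a vector `v`. -/
def contr (i : Fin 3) (P : Tensor n K) (v : Fin n → K) : Matrix (Fin n) (Fin n) K :=
  ![Matrix.of fun j k => ∑ a, P (a, j, k) * v a,
    Matrix.of fun j k => ∑ b, P (j, b, k) * v b,
    Matrix.of fun j k => ∑ c, P (j, k, c) * v c] i

/-- The `j`-th `i`-slice of `P`, i.e. `P *_i e_j`. -/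
def slice (i : Fin 3) (P : Tensor n K) (j : Fin n) : Matrix (Fin n) (Fin n) K :=
  contr i P (Pi.single j 1)

/-- The commutation relations in index `i`:
`(P*_i e_j)·adj(P*_i v)·(P*_i e_k) = (P*_i e_k)·adj(P*_i v)·(P*_i e_j)`
for all `v` and all `j < k`. -/
def CommRel (i : Fin 3) (P : Tensor n K) : Prop :=
  ∀ (v : Fin n → K) (j k : Fin n), j < k →
    slice i P j * (contr i P v).adjugate * slice i P k
      = slice i P k * (contr i P v).adjugate * slice i P j

/-- The matrix `P *_i x`, where `x` is a vector of indeterminates. -/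
noncomputable def contrX (i : Fin 3) (P : Tensor n K) :
    Matrix (Fin n) (Fin n) (MvPolynomial (Fin n) K) :=
  ![Matrix.of fun j k => ∑ a, MvPolynomial.C (P (a, j, k)) * MvPolynomial.X a,
    Matrix.of fun j k => ∑ b, MvPolynomial.C (P (j, b, k)) * MvPolynomial.X b,
    Matrix.of fun j k => ∑ c, MvPolynomial.C (P (j, k, c)) * MvPolynomial.X c] i

/-- `h_i(P;x) = det (P *_i x)`, a polynomial in the indeterminates `x`. -/
noncomputable def hpoly (i : Fin 3) (P : Tensor n K) : MvPolynomial (Fin n) K :=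
  (contrX i P).det

/-- The Hessian matrix of a polynomial in the indeterminates `x`. -/
noncomputable def hess (p : MvPolynomial (Fin n) K) :
    Matrix (Fin n) (Fin n) (MvPolynomial (Fin n) K) :=
  Matrix.of fun a b => MvPolynomial.pderiv a (MvPolynomial.pderiv b p)

/-- `f_i(P;x) = (-1)^(n-1) det (H_x (h_i(P;x)))`. -/
noncomputable def fpoly (i : Fin 3) (P : Tensor n K) : MvPolynomial (Fin n) K :=
  (-1) ^ (n - 1) * (hess (hpoly i P)).det

/-- Substitution `x ↦ g x` in a polynomial in the indeterminates `x`. -/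
noncomputable def substX (g : Matrix (Fin n) (Fin n) K) (p : MvPolynomial (Fin n) K) :
    MvPolynomial (Fin n) K :=
  MvPolynomial.aeval (fun j => ∑ k, MvPolynomial.C (g j k) * MvPolynomial.X k) p

end CommRing

/-- A complex tensor is real when all of its entries are real. -/
def IsReal (P : Tensor n ℂ) : Prop := ∀ x, (P x).im = 0

/-- The inclusion of real tensors into complex tensors. -/
noncomputable def toC (n : ℕ) : Tensor n ℝ → Tensor n ℂ := fun P x => (P x : ℂ)

/-- The orbit `𝒟(ℝ)` of `D` under `GL(n,ℝ)³`, viewed inside the complex tensors. -/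
def orbitDR (n : ℕ) : Set (Tensor n ℂ) := toC n '' orbitD n ℝ

/-- The border rank of `P`: the smallest `r` such that `P` is a limit of tensors of
rank at most `r`. -/
noncomputable def borderRank (P : Tensor n ℂ) : ℕ :=
  sInf {r | P ∈ closure {Q : Tensor n ℂ | Q.HasRankLE r}}

/-- The first nonzero entry of every row of `g` equals `1`. -/
def FirstNonzeroOne (g : Matrix (Fin n) (Fin n) ℂ) : Prop :=
  ∀ r c : Fin n, g r c ≠ 0 → (∀ c' : Fin n, c' < c → g r c' = 0) → g r c = 1

/-- The first `2k` rows of `g` are non-real and not purely imaginary, and occur in complex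
conjugate pairs (row `2j+1` conjugate to row `2j`); the remaining rows are real. -/
def ConjPairStructure (k : ℕ) (g : Matrix (Fin n) (Fin n) ℂ) : Prop :=
  (∀ m m' : Fin n, (m : ℕ) < 2 * k → Even (m : ℕ) → (m' : ℕ) = (m : ℕ) + 1 →
      ∀ c, g m' c = (starRingEnd ℂ) (g m c)) ∧
  (∀ m : Fin n, (m : ℕ) < 2 * k → (∃ c, (g m c).im ≠ 0) ∧ (∃ c, (g m c).re ≠ 0)) ∧
  (∀ m : Fin n, 2 * k ≤ (m : ℕ) → ∀ c, (g m c).im = 0)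

/-- A normalized decomposition `P = D(g₁,g₂,g₃)` exhibiting signature `(n-2k, k)`:
the first nonzero entry of every row of `g₁,g₂` is `1`, and each `gᵢ` has its first `2k`
rows non-real occurring in conjugate pairs, with the remaining rows real. -/
def SigDecomp (P : Tensor n ℂ) (k : ℕ) (g₁ g₂ g₃ : Matrix (Fin n) (Fin n) ℂ) : Prop :=
  2 * k ≤ n ∧ IsUnit g₁.det ∧ IsUnit g₂.det ∧ IsUnit g₃.det ∧
  P = (DT n ℂ).act g₁ g₂ g₃ ∧
  FirstNonzeroOne g₁ ∧ FirstNonzeroOne g₂ ∧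
  ConjPairStructure k g₁ ∧ ConjPairStructure k g₂ ∧ ConjPairStructure k g₃

/-- `P` has signature `(n-2k, k)`: its unique rank-`n` decomposition has exactly `2k`
non-real rank-one summands, occurring in conjugate pairs. -/
def HasSignature (P : Tensor n ℂ) (k : ℕ) : Prop :=
  ∃ g₁ g₂ g₃ : Matrix (Fin n) (Fin n) ℂ, SigDecomp P k g₁ g₂ g₃

/-- Cayley's hyperdeterminant of a `2×2×2` tensor. -/
noncomputable def Delta (P : Tensor 2 ℂ) : ℂ :=
  (P (0,0,0) ^ 2 * P (1,1,1) ^ 2 + P (0,0,1) ^ 2 * P (1,1,0) ^ 2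
    + P (0,1,0) ^ 2 * P (1,0,1) ^ 2 + P (0,1,1) ^ 2 * P (1,0,0) ^ 2)
  - 2 * (P (0,0,0) * P (0,0,1) * P (1,1,0) * P (1,1,1)
    + P (0,0,0) * P (0,1,0) * P (1,0,1) * P (1,1,1)
    + P (0,0,0) * P (0,1,1) * P (1,0,0) * P (1,1,1)
    + P (0,0,1) * P (0,1,0) * P (1,0,1) * P (1,1,0)
    + P (0,0,1) * P (0,1,1) * P (1,1,0) * P (1,0,0)
    + P (0,1,0) * P (0,1,1) * P (1,0,1) * P (1,0,0))
  + 4 * (P (0,0,0) * P (0,1,1) * P (1,0,1) * P (1,1,0)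
    + P (0,0,1) * P (0,1,0) * P (1,0,0) * P (1,1,1))

/-- The Levi-Civita symbol on three indices, `ε₁₂₃ = 1`. -/
noncomputable def eps (i j k : Fin 3) : ℂ :=
  if (i, j, k) = ((0 : Fin 3), (1 : Fin 3), (2 : Fin 3)) ∨ (i, j, k) = (1, 2, 0)
      ∨ (i, j, k) = (2, 0, 1) then 1
  else if (i, j, k) = ((2 : Fin 3), (1 : Fin 3), (0 : Fin 3)) ∨ (i, j, k) = (1, 0, 2)
      ∨ (i, j, k) = (0, 2, 1) then -1
  else 0

/-- The degree-6 invariant `τ₃` of `3×3×3` tensors, given by a six-fold Levi-Civita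
contraction. -/
noncomputable def tau3 (P : Tensor 3 ℂ) : ℂ :=
  ∑ i : Fin 3 × Fin 3 × Fin 3, ∑ j : Fin 3 × Fin 3 × Fin 3, ∑ k : Fin 3 × Fin 3 × Fin 3,
    ∑ l : Fin 3 × Fin 3 × Fin 3, ∑ m : Fin 3 × Fin 3 × Fin 3, ∑ o : Fin 3 × Fin 3 × Fin 3,
      P i * P j * P k * P l * P m * P o *
        eps i.1 j.1 k.1 * eps j.2.1 k.2.1 l.2.1 * eps k.2.2 l.2.2 m.2.2 *
        eps l.1 m.1 o.1 * eps m.2.1 o.2.1 i.2.1 * eps o.2.2 i.2.2 j.2.2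

end Tensor

namespace Tensor
variable {nn : ℕ} {K : Type*} [CommRing K]

lemma act_apply (g₁ g₂ g₃ : Matrix (Fin n) (Fin n) K) (x) :
    (DT n K).act g₁ g₂ g₃ x = ∑ i, g₁ i x.1 * g₂ i x.2.1 * g₃ i x.2.2 := by
  simp [act, DT, ite_and, ite_mul, zero_mul, one_mul, Finset.sum_ite_eq]


end Tensor

namespace Tensor
variable {n : ℕ} {K : Type*} [CommRing K]

lemma sum_swap4 {α M : Type*} [Fintype α] [AddCommMonoid M] (F : α → α → α → α → M) :
    ∑ a, ∑ b, ∑ c, ∑ i, F a b c i = ∑ i, ∑ a, ∑ b, ∑ c, F a b c i := by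
  conv_lhs => enter [2, a, 2, b]; rw [Finset.sum_comm]
  conv_lhs => enter [2, a]; rw [Finset.sum_comm]
  rw [Finset.sum_comm]

lemma mul3_sum {α M : Type*} [Fintype α] [CommRing M] (p q r : α → M) :
    (∑ a, p a) * (∑ b, q b) * (∑ c, r c) = ∑ a, ∑ b, ∑ c, p a * q b * r c := by
  rw [Finset.sum_mul_sum, Finset.sum_mul]
  exact Finset.sum_congr rfl fun a _ => by rw [Finset.sum_mul_sum]

lemma act_act (g₁ g₂ g₃ h₁ h₂ h₃ : Matrix (Fin n) (Fin n) K) :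
    ((DT n K).act g₁ g₂ g₃).act h₁ h₂ h₃ = (DT n K).act (g₁*h₁) (g₂*h₂) (g₃*h₃) := by
  funext x
  have L : ((DT n K).act g₁ g₂ g₃).act h₁ h₂ h₃ x
      = ∑ a, ∑ b, ∑ c, (∑ i, g₁ i a * g₂ i b * g₃ i c) * h₁ a x.1 * h₂ b x.2.1 * h₃ c x.2.2 := by
    show (∑ a, ∑ b, ∑ c, (DT n K).act g₁ g₂ g₃ (a,b,c) * h₁ a x.1 * h₂ b x.2.1 * h₃ c x.2.2) = _
    exact Finset.sum_congr rfl fun a _ => Finset.sum_congr rfl fun b _ =>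
      Finset.sum_congr rfl fun c _ => by rw [act_apply]
  rw [L, act_apply]
  conv_rhs => enter [2, i]
              rw [Matrix.mul_apply, Matrix.mul_apply, Matrix.mul_apply, mul3_sum]
  simp only [Finset.sum_mul]
  rw [sum_swap4 (fun a b c i => g₁ i a * g₂ i b * g₃ i c * h₁ a x.1 * h₂ b x.2.1 * h₃ c x.2.2)]
  refine Finset.sum_congr rfl fun i _ => Finset.sum_congr rfl fun a _ =>
    Finset.sum_congr rfl fun b _ => Finset.sum_congr rfl fun c _ => by ring

lemma act_one (P : Tensor n K) : P.act 1 1 1 = P := by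
  funext x
  simp [act, Matrix.one_apply, ite_mul, mul_ite, Finset.sum_ite_eq', Finset.sum_ite_eq]

end Tensor

namespace Tensor
section FieldPart
variable {n : ℕ} {K : Type*} [Field K]

lemma rows_lin_indep {g : Matrix (Fin n) (Fin n) K} (hg : IsUnit g.det) (y : Fin n → K)
    (h : ∀ j, ∑ i, y i * g i j = 0) : y = 0 := by
  have hinj : Function.Injective g.vecMul :=
    Matrix.vecMul_injective_iff_isUnit.mpr ((Matrix.isUnit_iff_isUnit_det g).mpr hg)
  have h0 : Matrix.vecMul y g = Matrix.vecMul 0 g := by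
    rw [Matrix.zero_vecMul]
    funext j
    simpa [Matrix.vecMul, dotProduct] using h j
  exact hinj h0

lemma row_ne_zero {g : Matrix (Fin n) (Fin n) K} (hg : IsUnit g.det) (i : Fin n) :
    ∃ j, g i j ≠ 0 := by
  by_contra hcon
  push_neg at hcon
  have := rows_lin_indep hg (Pi.single i 1) (fun j => by
    rw [Finset.sum_eq_single i (fun b _ hb => by simp [Pi.single_apply, hb]) (by simp)]
    simp [hcon j])
  simpa using congr_fun this i

lemma two_rows {g : Matrix (Fin n) (Fin n) K} (hg : IsUnit g.det) {i i' : Fin n}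
    (hne : i ≠ i') (a b : K) (h : ∀ j, a * g i j + b * g i' j = 0) : a = 0 ∧ b = 0 := by
  have hy := rows_lin_indep hg
    (fun m => (if m = i then a else 0) + (if m = i' then b else 0)) (fun j => by
      simp only [add_mul, ite_mul, zero_mul, Finset.sum_add_distrib, Finset.sum_ite_eq',
        Finset.mem_univ, if_true]
      exact h j)
  constructor
  · simpa [hne] using congr_fun hy i
  · simpa [hne.symm] using congr_fun hy i'

lemma colStruct (A B C : Matrix (Fin n) (Fin n) K) (hA : IsUnit A.det) (hB : IsUnit B.det)
    (hC : IsUnit C.det)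
    (h : ∀ j k l, ∑ i, A i j * B i k * C i l = if j = k ∧ k = l then (1:K) else 0) :
    ∃ π : Equiv.Perm (Fin n), ∀ i j, A i j ≠ 0 ↔ j = π i := by
  have hBT : IsUnit Bᵀ.det := by rwa [Matrix.det_transpose]
  set E : Fin n → Matrix (Fin n) (Fin n) K :=
    fun j => Matrix.of (fun k l => if j = k ∧ j = l then (1:K) else 0) with hE
  -- step 1: matrix identity
  have step1 : ∀ j, Bᵀ * Matrix.diagonal (fun i => A i j) * C = E j := by
    intro j
    ext k l
    rw [Matrix.mul_apply]
    have he : ∀ i, (Bᵀ * Matrix.diagonal (fun i => A i j)) k i * C i l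
        = A i j * B i k * C i l := fun i => by
      rw [Matrix.mul_diagonal, Matrix.transpose_apply]; ring
    rw [Finset.sum_congr rfl fun i _ => he i, h j k l]
    simp only [hE, Matrix.of_apply]
    by_cases h1 : j = k <;> by_cases h2 : k = l <;> simp [h1, h2] <;> omega
  -- step 2
  have step2 : ∀ j, Matrix.diagonal (fun i => A i j) = Bᵀ⁻¹ * E j * C⁻¹ := by
    intro j
    have h1 : Bᵀ⁻¹ * (Bᵀ * Matrix.diagonal (fun i => A i j) * C) * C⁻¹
        = Matrix.diagonal (fun i => A i j) := by
      rw [show Bᵀ⁻¹ * (Bᵀ * Matrix.diagonal (fun i => A i j) * C) * C⁻¹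
          = Bᵀ⁻¹ * Bᵀ * Matrix.diagonal (fun i => A i j) * (C * C⁻¹) by
        simp only [Matrix.mul_assoc]]
      rw [Matrix.nonsing_inv_mul _ hBT, Matrix.mul_nonsing_inv _ hC, Matrix.one_mul,
        Matrix.mul_one]
    rw [← h1, step1 j, Matrix.mul_assoc]
  have entry : ∀ (j i i' : Fin n), (Bᵀ⁻¹ * E j * C⁻¹) i i' = Bᵀ⁻¹ i j * C⁻¹ j i' := by
    intro j i i'
    rw [Matrix.mul_apply]
    rw [Finset.sum_eq_single j (fun b _ hb => by
      rw [Matrix.mul_apply, Finset.sum_eq_zero (fun m _ => by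
        simp only [hE, Matrix.of_apply]
        rw [if_neg (fun hc => hb hc.2.symm), mul_zero]), zero_mul])
      (by simp)]
    congr 1
    rw [Matrix.mul_apply]
    rw [Finset.sum_eq_single j (fun b _ hb => by
      simp only [hE, Matrix.of_apply]
      rw [if_neg (fun hc => hb hc.1.symm), mul_zero]) (by simp)]
    simp [hE]
  have hoff : ∀ (j i i' : Fin n), i ≠ i' → Bᵀ⁻¹ i j * C⁻¹ j i' = 0 := by
    intro j i i' hne
    have := congr_fun (congr_fun (step2 j) i) i'
    rw [entry] at this
    rw [← this, Matrix.diagonal_apply_ne _ hne]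
  have hval : ∀ (j i : Fin n), A i j = Bᵀ⁻¹ i j * C⁻¹ j i := by
    intro j i
    have := congr_fun (congr_fun (step2 j) i) i
    rw [entry] at this
    rw [← this, Matrix.diagonal_apply_eq]
  -- column uniqueness
  have colu : ∀ (j i i' : Fin n), i ≠ i' → A i j ≠ 0 → A i' j = 0 := by
    intro j i i' hne hAij
    by_contra hAi'
    rw [hval] at hAij hAi'
    exact absurd (hoff j i i' hne)
      (mul_ne_zero (left_ne_zero_of_mul hAij) (right_ne_zero_of_mul hAi'))
  -- each column nonzero
  have colnz : ∀ j, ∃ i, A i j ≠ 0 := by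
    intro j
    have hAT : IsUnit Aᵀ.det := by rwa [Matrix.det_transpose]
    obtain ⟨i, hi⟩ := row_ne_zero hAT j
    exact ⟨i, hi⟩
  choose r hr using colnz
  have hrinj : Function.Injective r := by
    intro j j' hjj
    by_contra hne
    have hAT : IsUnit Aᵀ.det := by rwa [Matrix.det_transpose]
    have h2 := two_rows hAT hne (A (r j) j') (-(A (r j) j)) (fun m => by
      by_cases hm : m = r j
      · subst hm; simp [Matrix.transpose_apply]; ring
      · have e1 : A m j = 0 := colu j (r j) m (Ne.symm hm) (hr j)
        have e2 : A m j' = 0 := by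
          refine colu j' (r j') m ?_ (hr j')
          rw [← hjj]; exact fun e => hm e.symm
        simp [Matrix.transpose_apply, e1, e2])
    exact absurd h2.1 (by rw [hjj]; exact hr j')
  have hrbij : Function.Bijective r := Finite.injective_iff_bijective.mp hrinj
  refine ⟨(Equiv.ofBijective r hrbij).symm, fun i j => ?_⟩
  constructor
  · intro hij
    have : i = r j := by
      by_contra hne
      exact hij (colu j (r j) i (fun e => hne e.symm) (hr j))
    rw [this]
    exact ((Equiv.ofBijective r hrbij).symm_apply_apply j).symm
  · intro hj
    subst hj
    have h2 : r ((Equiv.ofBijective r hrbij).symm i) = i :=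
      (Equiv.ofBijective r hrbij).apply_symm_apply i
    have h3 := hr ((Equiv.ofBijective r hrbij).symm i)
    rwa [h2] at h3

end FieldPart
end Tensor

namespace Tensor
section FieldPart2
variable {n : ℕ} {K : Type*} [Field K]

lemma keyLemma (A B C : Matrix (Fin n) (Fin n) K) (hA : IsUnit A.det) (hB : IsUnit B.det)
    (hC : IsUnit C.det)
    (h : ∀ j k l, ∑ i, A i j * B i k * C i l = if j = k ∧ k = l then (1:K) else 0) :
    ∃ π : Equiv.Perm (Fin n),
      (∀ i j, A i j ≠ 0 ↔ j = π i) ∧ (∀ i j, B i j ≠ 0 ↔ j = π i) ∧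
      (∀ i j, C i j ≠ 0 ↔ j = π i) ∧ ∀ i, A i (π i) * B i (π i) * C i (π i) = 1 := by
  obtain ⟨π, hπ⟩ := colStruct A B C hA hB hC h
  obtain ⟨ρ, hρ⟩ := colStruct B C A hB hC hA (fun j k l => by
    rw [show (∑ i, B i j * C i k * A i l) = ∑ i, A i l * B i j * C i k from
      Finset.sum_congr rfl fun i _ => by ring, h l j k]
    congr 1
    simp only [eq_iff_iff]
    constructor
    · rintro ⟨rfl, rfl⟩; exact ⟨rfl, rfl⟩
    · rintro ⟨rfl, rfl⟩; exact ⟨rfl, rfl⟩)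
  obtain ⟨χ, hχ⟩ := colStruct C A B hC hA hB (fun j k l => by
    rw [show (∑ i, C i j * A i k * B i l) = ∑ i, A i k * B i l * C i j from
      Finset.sum_congr rfl fun i _ => by ring, h k l j]
    congr 1
    simp only [eq_iff_iff]
    constructor
    · rintro ⟨rfl, rfl⟩; exact ⟨rfl, rfl⟩
    · rintro ⟨rfl, rfl⟩; exact ⟨rfl, rfl⟩)
  have main : ∀ i, (π i = ρ i ∧ ρ i = χ i) ∧ A i (π i) * B i (ρ i) * C i (χ i) = 1 := by
    intro i
    have hsum := h (π i) (ρ i) (χ i)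
    rw [Finset.sum_eq_single i (fun i' _ hi' => by
      have : A i' (π i) = 0 := by
        by_contra hc
        exact hi' (π.injective ((hπ i' (π i)).mp hc).symm)
      rw [this, zero_mul, zero_mul]) (by simp)] at hsum
    have hne : A i (π i) * B i (ρ i) * C i (χ i) ≠ 0 :=
      mul_ne_zero (mul_ne_zero ((hπ i (π i)).mpr rfl) ((hρ i (ρ i)).mpr rfl))
        ((hχ i (χ i)).mpr rfl)
    by_cases hcond : π i = ρ i ∧ ρ i = χ i
    · rw [if_pos hcond] at hsum; exact ⟨hcond, hsum⟩
    · rw [if_neg hcond] at hsum; exact absurd hsum hne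
  have hρπ : ∀ i, ρ i = π i := fun i => ((main i).1.1).symm
  have hχπ : ∀ i, χ i = π i := fun i => by rw [← (main i).1.2, hρπ i]
  refine ⟨π, hπ, fun i j => by rw [hρ i j, hρπ i], fun i j => by rw [hχ i j, hχπ i], fun i => ?_⟩
  have := (main i).2
  rwa [hρπ i, hχπ i] at this

end FieldPart2
end Tensor

namespace Tensor
section FieldPart3
variable {n : ℕ} {K : Type*} [Field K]

lemma uniq (g₁ g₂ g₃ g₁' g₂' g₃' : Matrix (Fin n) (Fin n) K)
    (h₁ : IsUnit g₁.det) (h₂ : IsUnit g₂.det) (h₃ : IsUnit g₃.det)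
    (h₁' : IsUnit g₁'.det) (h₂' : IsUnit g₂'.det) (h₃' : IsUnit g₃'.det)
    (heq : (DT n K).act g₁' g₂' g₃' = (DT n K).act g₁ g₂ g₃) :
    ∃ (π : Equiv.Perm (Fin n)) (e₁ e₂ e₃ : Fin n → K),
      (∀ m, e₁ m ≠ 0 ∧ e₂ m ≠ 0 ∧ e₃ m ≠ 0 ∧ e₁ m * e₂ m * e₃ m = 1) ∧
      (∀ m j, g₁' m j = e₁ m * g₁ (π m) j) ∧ (∀ m j, g₂' m j = e₂ m * g₂ (π m) j) ∧
      (∀ m j, g₃' m j = e₃ m * g₃ (π m) j) := by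
  set A := g₁' * g₁⁻¹ with hAdef
  set B := g₂' * g₂⁻¹ with hBdef
  set C := g₃' * g₃⁻¹ with hCdef
  have hA : IsUnit A.det := by
    rw [hAdef, Matrix.det_mul]; exact h₁'.mul (Matrix.isUnit_nonsing_inv_det _ h₁)
  have hB : IsUnit B.det := by
    rw [hBdef, Matrix.det_mul]; exact h₂'.mul (Matrix.isUnit_nonsing_inv_det _ h₂)
  have hC : IsUnit C.det := by
    rw [hCdef, Matrix.det_mul]; exact h₃'.mul (Matrix.isUnit_nonsing_inv_det _ h₃)
  have hD : (DT n K).act A B C = DT n K := by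
    rw [hAdef, hBdef, hCdef, ← act_act, heq, act_act,
      Matrix.mul_nonsing_inv _ h₁, Matrix.mul_nonsing_inv _ h₂, Matrix.mul_nonsing_inv _ h₃,
      act_one]
  have h' : ∀ j k l, ∑ i, A i j * B i k * C i l = if j = k ∧ k = l then (1:K) else 0 := by
    intro j k l
    have := congr_fun hD (j, k, l)
    rwa [act_apply] at this
  obtain ⟨π, hπA, hπB, hπC, hprod⟩ := keyLemma A B C hA hB hC h'
  have hg₁ : g₁' = A * g₁ := by
    rw [hAdef, Matrix.mul_assoc, Matrix.nonsing_inv_mul _ h₁, Matrix.mul_one]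
  have hg₂ : g₂' = B * g₂ := by
    rw [hBdef, Matrix.mul_assoc, Matrix.nonsing_inv_mul _ h₂, Matrix.mul_one]
  have hg₃ : g₃' = C * g₃ := by
    rw [hCdef, Matrix.mul_assoc, Matrix.nonsing_inv_mul _ h₃, Matrix.mul_one]
  have collapse : ∀ (M : Matrix (Fin n) (Fin n) K) (hM : ∀ i j, M i j ≠ 0 ↔ j = π i)
      (g : Matrix (Fin n) (Fin n) K) (m j : Fin n),
      (M * g) m j = M m (π m) * g (π m) j := by
    intro M hM g m j
    rw [Matrix.mul_apply]
    exact Finset.sum_eq_single (π m) (fun b _ hb => by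
      have : M m b = 0 := by by_contra hc; exact hb ((hM m b).mp hc)
      rw [this, zero_mul]) (by simp)
  refine ⟨π, fun m => A m (π m), fun m => B m (π m), fun m => C m (π m),
    fun m => ⟨(hπA m (π m)).mpr rfl, (hπB m (π m)).mpr rfl, (hπC m (π m)).mpr rfl, hprod m⟩,
    fun m j => by rw [hg₁, collapse A hπA], fun m j => by rw [hg₂, collapse B hπB],
    fun m j => by rw [hg₃, collapse C hπC]⟩

end FieldPart3
end Tensor


namespace Tensor
variable {n : ℕ}

lemma first_col_spec (u : Fin n → ℂ) (hnz : ∃ c, u c ≠ 0) :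
    ∃ c₀, u c₀ ≠ 0 ∧ (∀ c', c' < c₀ → u c' = 0) ∧
      (∀ c, u c ≠ 0 → (∀ c', c' < c → u c' = 0) → c = c₀) := by
  classical
  set s := Finset.univ.filter (fun c => u c ≠ 0) with hs
  have hsne : s.Nonempty := by
    obtain ⟨c, hc⟩ := hnz
    exact ⟨c, by simp [hs, hc]⟩
  refine ⟨s.min' hsne, ?_, ?_, ?_⟩
  · have := s.min'_mem hsne
    simp only [hs, Finset.mem_filter] at this
    exact this.2
  · intro c' hc'
    by_contra hne
    have hmem : c' ∈ s := by simp [hs, hne]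
    exact absurd hc' (not_lt.mpr (s.min'_le c' hmem))
  · intro c hc hall
    have h1 : s.min' hsne ≤ c := s.min'_le c (by simp [hs, hc])
    rcases lt_or_eq_of_le h1 with h2 | h2
    · have := s.min'_mem hsne
      simp only [hs, Finset.mem_filter] at this
      exact absurd (hall _ h2) this.2
    · exact h2.symm

lemma row_scale_eq_one (u u' : Fin n → ℂ) (e : ℂ)
    (hu : ∀ c, u c ≠ 0 → (∀ c', c' < c → u c' = 0) → u c = 1)
    (hu' : ∀ c, u' c ≠ 0 → (∀ c', c' < c → u' c' = 0) → u' c = 1)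
    (hnz : ∃ c, u c ≠ 0) (he : e ≠ 0) (hrel : ∀ c, u' c = e * u c) : e = 1 := by
  obtain ⟨c₀, h1, h2, _⟩ := first_col_spec u hnz
  have hu1 : u c₀ = 1 := hu c₀ h1 h2
  have h1' : u' c₀ ≠ 0 := by rw [hrel, hu1, mul_one]; exact he
  have h2' : ∀ c', c' < c₀ → u' c' = 0 := fun c' hc' => by rw [hrel, h2 c' hc', mul_zero]
  have := hu' c₀ h1' h2'
  rwa [hrel, hu1, mul_one] at this

lemma rows_distinct {g : Matrix (Fin n) (Fin n) ℂ} (hg : IsUnit g.det) {m m' : Fin n}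
    (hne : m ≠ m') (h : ∀ j, g m j = g m' j) : False := by
  have := two_rows hg hne 1 (-1) (fun j => by rw [h j]; ring)
  simpa using this.1

lemma rows_not_opposite {g : Matrix (Fin n) (Fin n) ℂ} (hg : IsUnit g.det) {m m' : Fin n}
    (hne : m ≠ m') (h : ∀ j, g m j = -g m' j) : False := by
  have := two_rows hg hne 1 1 (fun j => by rw [h j]; ring)
  simpa using this.1

/-- conjugate of a matrix -/
def conjM (g : Matrix (Fin n) (Fin n) ℂ) : Matrix (Fin n) (Fin n) ℂ :=
  g.map (starRingEnd ℂ)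

lemma conjM_apply (g : Matrix (Fin n) (Fin n) ℂ) (i j : Fin n) :
    conjM g i j = (starRingEnd ℂ) (g i j) := rfl

lemma conjM_det {g : Matrix (Fin n) (Fin n) ℂ} (hg : IsUnit g.det) : IsUnit (conjM g).det := by
  have : (conjM g).det = (starRingEnd ℂ) g.det := ((starRingEnd ℂ).map_det g).symm
  rw [this]
  simp only [isUnit_iff_ne_zero] at hg ⊢
  simpa using hg

lemma act_conj (g₁ g₂ g₃ : Matrix (Fin n) (Fin n) ℂ) (x) :
    (starRingEnd ℂ) ((DT n ℂ).act g₁ g₂ g₃ x)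
      = (DT n ℂ).act (conjM g₁) (conjM g₂) (conjM g₃) x := by
  rw [act_apply, act_apply, map_sum]
  exact Finset.sum_congr rfl fun i _ => by
    rw [(starRingEnd ℂ).map_mul, (starRingEnd ℂ).map_mul]; rfl

lemma conjM_fno {g : Matrix (Fin n) (Fin n) ℂ} (hg : FirstNonzeroOne g) :
    FirstNonzeroOne (conjM g) := by
  intro r c hc hall
  rw [conjM_apply] at hc ⊢
  have h1 : g r c ≠ 0 := fun h => hc (by rw [h, map_zero])
  have h2 : ∀ c', c' < c → g r c' = 0 := fun c' hc' => by
    have := hall c' hc'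
    rw [conjM_apply] at this
    exact star_eq_zero.mp this
  rw [hg r c h1 h2, (starRingEnd ℂ).map_one]

end Tensor

namespace Tensor
variable {n : ℕ}

lemma rowscale_det (d : Fin n → ℂ) (h : Matrix (Fin n) (Fin n) ℂ) (hd : ∀ m, d m ≠ 0)
    (hh : IsUnit h.det) : IsUnit (Matrix.of fun m j => d m * h m j).det := by
  have he : (Matrix.of fun m j => d m * h m j) = Matrix.diagonal d * h := by
    ext m j; simp [Matrix.diagonal_mul]
  rw [he, Matrix.det_mul, Matrix.det_diagonal]
  exact (isUnit_iff_ne_zero.mpr (Finset.prod_ne_zero_iff.mpr fun m _ => hd m)).mul hh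

lemma exists_fno (P : Tensor n ℂ) (hP : P ∈ orbitD n ℂ) :
    ∃ g₁ g₂ g₃ : Matrix (Fin n) (Fin n) ℂ, IsUnit g₁.det ∧ IsUnit g₂.det ∧ IsUnit g₃.det ∧
      P = (DT n ℂ).act g₁ g₂ g₃ ∧ FirstNonzeroOne g₁ ∧ FirstNonzeroOne g₂ := by
  obtain ⟨h₁, h₂, h₃, hu₁, hu₂, hu₃, hPeq⟩ := hP
  choose c₁ hc₁ hz₁ hun₁ using fun m => first_col_spec (h₁ m) (row_ne_zero hu₁ m)
  choose c₂ hc₂ hz₂ hun₂ using fun m => first_col_spec (h₂ m) (row_ne_zero hu₂ m)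
  set α := fun m => h₁ m (c₁ m) with hα
  set β := fun m => h₂ m (c₂ m) with hβ
  have hαne : ∀ m, (α m)⁻¹ ≠ 0 := fun m => inv_ne_zero (hc₁ m)
  have hβne : ∀ m, (β m)⁻¹ ≠ 0 := fun m => inv_ne_zero (hc₂ m)
  refine ⟨Matrix.of fun m j => (α m)⁻¹ * h₁ m j, Matrix.of fun m j => (β m)⁻¹ * h₂ m j,
    Matrix.of fun m j => (α m * β m) * h₃ m j,
    rowscale_det _ _ hαne hu₁, rowscale_det _ _ hβne hu₂,
    rowscale_det _ _ (fun m => mul_ne_zero (hc₁ m) (hc₂ m)) hu₃, ?_, ?_, ?_⟩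
  · rw [hPeq]
    funext x
    rw [act_apply, act_apply]
    refine Finset.sum_congr rfl fun i _ => ?_
    simp only [Matrix.of_apply]
    have h1 := hc₁ i
    have h2 := hc₂ i
    rw [← hα, ← hβ] at *
    field_simp
    have ha : α i * (α i)⁻¹ = 1 := mul_inv_cancel₀ h1
    have hb : β i * (β i)⁻¹ = 1 := mul_inv_cancel₀ h2
    linear_combination (-(h₁ i x.1 * h₂ i x.2.1 * h₃ i x.2.2 * β i * (β i)⁻¹)) * ha - (h₁ i x.1 * h₂ i x.2.1 * h₃ i x.2.2) * hb
  · intro r c hc hall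
    simp only [Matrix.of_apply] at hc hall ⊢
    have h1 : h₁ r c ≠ 0 := right_ne_zero_of_mul hc
    have h2 : ∀ c', c' < c → h₁ r c' = 0 := fun c' hc' => by
      rcases mul_eq_zero.mp (hall c' hc') with h | h
      · exact absurd h (hαne r)
      · exact h
    rw [hun₁ r c h1 h2]
    exact inv_mul_cancel₀ (hc₁ r)
  · intro r c hc hall
    simp only [Matrix.of_apply] at hc hall ⊢
    have h1 : h₂ r c ≠ 0 := right_ne_zero_of_mul hc
    have h2 : ∀ c', c' < c → h₂ r c' = 0 := fun c' hc' => by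
      rcases mul_eq_zero.mp (hall c' hc') with h | h
      · exact absurd h (hβne r)
      · exact h
    rw [hun₂ r c h1 h2]
    exact inv_mul_cancel₀ (hc₂ r)

end Tensor

namespace Tensor
variable {n : ℕ}

lemma conj_perm {P : Tensor n ℂ} (hreal : IsReal P) {g₁ g₂ g₃ : Matrix (Fin n) (Fin n) ℂ}
    (hu₁ : IsUnit g₁.det) (hu₂ : IsUnit g₂.det) (hu₃ : IsUnit g₃.det)
    (hPeq : P = (DT n ℂ).act g₁ g₂ g₃) (hf₁ : FirstNonzeroOne g₁)
    (hf₂ : FirstNonzeroOne g₂) :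
    ∃ π : Equiv.Perm (Fin n),
      (∀ m j, (starRingEnd ℂ) (g₁ m j) = g₁ (π m) j) ∧
      (∀ m j, (starRingEnd ℂ) (g₂ m j) = g₂ (π m) j) ∧
      (∀ m j, (starRingEnd ℂ) (g₃ m j) = g₃ (π m) j) := by
  have hconjact : (DT n ℂ).act (conjM g₁) (conjM g₂) (conjM g₃) = (DT n ℂ).act g₁ g₂ g₃ := by
    funext x
    rw [← act_conj, ← hPeq]
    have := hreal x
    exact Complex.conj_eq_iff_im.mpr this
  obtain ⟨π, e₁, e₂, e₃, he, hr₁, hr₂, hr₃⟩ := uniq g₁ g₂ g₃ (conjM g₁) (conjM g₂) (conjM g₃)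
    hu₁ hu₂ hu₃ (conjM_det hu₁) (conjM_det hu₂) (conjM_det hu₃) hconjact
  have he₁ : ∀ m, e₁ m = (1:ℂ) := fun m => row_scale_eq_one (g₁ (π m)) (conjM g₁ m) (e₁ m)
    (fun c => hf₁ (π m) c) (fun c => conjM_fno hf₁ m c)
    (row_ne_zero hu₁ (π m)) (he m).1 (fun j => hr₁ m j)
  have he₂ : ∀ m, e₂ m = (1:ℂ) := fun m => row_scale_eq_one (g₂ (π m)) (conjM g₂ m) (e₂ m)
    (fun c => hf₂ (π m) c) (fun c => conjM_fno hf₂ m c)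
    (row_ne_zero hu₂ (π m)) (he m).2.1 (fun j => hr₂ m j)
  have he₃ : ∀ m, e₃ m = (1:ℂ) := fun m => by
    have hp := (he m).2.2.2
    rw [he₁ m, he₂ m, one_mul, one_mul] at hp
    exact hp
  refine ⟨π, fun m j => ?_, fun m j => ?_, fun m j => ?_⟩
  · have := hr₁ m j; rw [he₁ m, one_mul] at this; exact this
  · have := hr₂ m j; rw [he₂ m, one_mul] at this; exact this
  · have := hr₃ m j; rw [he₃ m, one_mul] at this; exact this

end Tensor

namespace Tensor
variable {n : ℕ}

lemma exists_sig (P : Tensor n ℂ) (hreal : IsReal P) (hP : P ∈ orbitD n ℂ) :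
    ∃ (k : ℕ) (g₁ g₂ g₃ : Matrix (Fin n) (Fin n) ℂ), SigDecomp P k g₁ g₂ g₃ := by
  classical
  obtain ⟨g₁, g₂, g₃, hu₁, hu₂, hu₃, hPeq, hf₁, hf₂⟩ := exists_fno P hP
  obtain ⟨π, hcj₁, hcj₂, hcj₃⟩ := conj_perm hreal hu₁ hu₂ hu₃ hPeq hf₁ hf₂
  have hinv : ∀ m, π (π m) = m := by
    intro m
    by_contra hne
    exact rows_distinct hu₁ hne
      (fun j => by rw [← hcj₁ (π m) j, ← hcj₁ m j, Complex.conj_conj])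
  -- row facts
  have rowfacts : ∀ (g : Matrix (Fin n) (Fin n) ℂ), IsUnit g.det →
      (∀ m j, (starRingEnd ℂ) (g m j) = g (π m) j) →
      (∀ m, π m ≠ m → (∃ c, (g m c).im ≠ 0) ∧ (∃ c, (g m c).re ≠ 0)) ∧
      (∀ m, π m = m → ∀ c, (g m c).im = 0) := by
    intro g hu hcj
    constructor
    · intro m hne
      constructor
      · by_contra hcon
        push_neg at hcon
        refine rows_distinct hu (Ne.symm hne) (fun j => ?_)
        rw [← hcj m j, Complex.conj_eq_iff_im.mpr (hcon j)]
      · by_contra hcon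
        push_neg at hcon
        refine rows_not_opposite hu (Ne.symm hne) (fun j => ?_)
        rw [← hcj m j]
        apply Complex.ext <;> simp [hcon j]
    · intro m hfix c
      have := hcj m c
      rw [hfix] at this
      exact Complex.conj_eq_iff_im.mp this
  -- the pairing sets
  set T : Finset (Fin n) := Finset.univ.filter (fun m => m < π m) with hTdef
  set T' : Finset (Fin n) := Finset.univ.filter (fun m => π m < m) with hT'def
  set F : Finset (Fin n) := Finset.univ.filter (fun m => π m = m) with hFdef
  set k := T.card with hkdef
  have hTT' : T.card = T'.card := by
    refine Finset.card_bij (fun a _ => π a) ?_ ?_ ?_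
    · intro a ha
      simp only [hTdef, Finset.mem_filter, Finset.mem_univ, true_and] at ha
      simp only [hT'def, Finset.mem_filter, Finset.mem_univ, true_and, hinv a]
      exact ha
    · intro a _ b _ hab
      exact π.injective hab
    · intro b hb
      simp only [hT'def, Finset.mem_filter, Finset.mem_univ, true_and] at hb
      refine ⟨π b, ?_, hinv b⟩
      simp only [hTdef, Finset.mem_filter, Finset.mem_univ, true_and, hinv b]
      exact hb
  have hpart : F.card + (T.card + T'.card) = n := by
    have hsplit : Finset.univ.filter (fun m : Fin n => ¬ π m = m) = T ∪ T' := by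
      ext m
      simp only [hTdef, hT'def, Finset.mem_union, Finset.mem_filter, Finset.mem_univ, true_and]
      constructor
      · intro h
        rcases lt_or_gt_of_ne (fun e : m = π m => h e.symm) with h' | h'
        · exact Or.inl h'
        · exact Or.inr h'
      · rintro (h | h) heq <;> omega
    have hdisj : Disjoint T T' := by
      rw [Finset.disjoint_filter]
      intro x _ h1 h2
      omega
    have := Finset.card_filter_add_card_filter_not
      (s := (Finset.univ : Finset (Fin n))) (p := fun m => π m = m)
    rw [hsplit, Finset.card_union_of_disjoint hdisj] at this
    simpa [hFdef, Fintype.card_fin] using this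
  have hk2 : 2 * k ≤ n := by omega
  have hFcard : F.card = n - 2 * k := by omega
  set eT := T.equivFinOfCardEq (hkdef.symm) with heT
  set eF := F.equivFinOfCardEq hFcard with heF
  set ρ : Fin n → Fin n := fun m =>
    if h : (m : ℕ) < 2 * k then
      if (m : ℕ) % 2 = 0 then (eT.symm ⟨(m : ℕ) / 2, by omega⟩ : {x // x ∈ T})
      else π (eT.symm ⟨(m : ℕ) / 2, by omega⟩ : {x // x ∈ T})
    else (eF.symm ⟨(m : ℕ) - 2 * k, by omega⟩ : {x // x ∈ F}) with hρdef
  have hρ_lt : ∀ (m : Fin n) (h : (m:ℕ) < 2 * k), (m:ℕ) % 2 = 0 →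
      ρ m = (eT.symm ⟨(m : ℕ) / 2, by omega⟩ : {x // x ∈ T}) := by
    intro m h hev
    simp only [hρdef, dif_pos h, if_pos hev]
  have hρ_lt' : ∀ (m : Fin n) (h : (m:ℕ) < 2 * k), (m:ℕ) % 2 = 1 →
      ρ m = π (eT.symm ⟨(m : ℕ) / 2, by omega⟩ : {x // x ∈ T}) := by
    intro m h hev
    simp only [hρdef, dif_pos h]
    rw [if_neg (by omega)]
  have hρ_ge : ∀ (m : Fin n) (h : ¬ ((m:ℕ) < 2 * k)),
      ρ m = (eF.symm ⟨(m : ℕ) - 2 * k, by omega⟩ : {x // x ∈ F}) := by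
    intro m h
    simp only [hρdef, dif_neg h]
  have hsurj : Function.Surjective ρ := by
    intro y
    rcases lt_trichotomy y (π y) with h1 | h1 | h1
    · have hyT : y ∈ T := by simp [hTdef, h1]
      have hi : (eT ⟨y, hyT⟩ : ℕ) < k := (eT ⟨y, hyT⟩).isLt
      refine ⟨⟨2 * (eT ⟨y, hyT⟩ : ℕ), by omega⟩, ?_⟩
      rw [hρ_lt _ (by simp <;> omega) (by simp <;> omega)]
      have : (⟨2 * (eT ⟨y, hyT⟩ : ℕ) / 2, by omega⟩ : Fin k) = eT ⟨y, hyT⟩ := by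
        apply Fin.ext; simp <;> omega
      rw [this, Equiv.symm_apply_apply]
    · have hyF : y ∈ F := by simp [hFdef, h1.symm]
      have hi : (eF ⟨y, hyF⟩ : ℕ) < n - 2 * k := (eF ⟨y, hyF⟩).isLt
      refine ⟨⟨2 * k + (eF ⟨y, hyF⟩ : ℕ), by omega⟩, ?_⟩
      rw [hρ_ge _ (by simp <;> omega)]
      have : (⟨(2 * k + (eF ⟨y, hyF⟩ : ℕ)) - 2 * k, by omega⟩ : Fin (n - 2*k))
          = eF ⟨y, hyF⟩ := by
        apply Fin.ext; simp
      rw [this, Equiv.symm_apply_apply]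
    · have hxT : π y ∈ T := by
        simp only [hTdef, Finset.mem_filter, Finset.mem_univ, true_and, hinv y]
        exact h1
      have hi : (eT ⟨π y, hxT⟩ : ℕ) < k := (eT ⟨π y, hxT⟩).isLt
      refine ⟨⟨2 * (eT ⟨π y, hxT⟩ : ℕ) + 1, by omega⟩, ?_⟩
      rw [hρ_lt' _ (by simp <;> omega) (by simp <;> omega)]
      have : (⟨(2 * (eT ⟨π y, hxT⟩ : ℕ) + 1) / 2, by omega⟩ : Fin k) = eT ⟨π y, hxT⟩ := by
        apply Fin.ext; simp <;> omega
      rw [this, Equiv.symm_apply_apply, hinv y]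
  have hρbij : Function.Bijective ρ := Finite.surjective_iff_bijective.mp hsurj
  set ρe : Equiv.Perm (Fin n) := Equiv.ofBijective ρ hρbij with hρe
  have hρe_apply : ∀ m, ρe m = ρ m := fun m => rfl
  -- facts about ρ
  have genT : ∀ z : {x // x ∈ T}, (z : Fin n) < π (z : Fin n) := by
    intro z
    have hz := z.2
    simp only [hTdef, Finset.mem_filter, Finset.mem_univ, true_and] at hz
    exact hz
  have fact1 : ∀ m : Fin n, (m:ℕ) < 2 * k → π (ρ m) ≠ ρ m := by
    intro m hm
    rcases Nat.even_or_odd (m : ℕ) with hev | hod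
    · rw [hρ_lt m hm (Nat.even_iff.mp hev)]
      have hz := genT (eT.symm ⟨(m : ℕ) / 2, by omega⟩)
      intro hc
      rw [hc] at hz
      exact lt_irrefl _ hz
    · rw [hρ_lt' m hm (Nat.odd_iff.mp hod)]
      have hz := genT (eT.symm ⟨(m : ℕ) / 2, by omega⟩)
      rw [hinv]
      intro hc
      rw [← hc] at hz
      exact lt_irrefl _ hz
  have fact2 : ∀ m : Fin n, 2 * k ≤ (m:ℕ) → π (ρ m) = ρ m := by
    intro m hm
    rw [hρ_ge m (by omega)]
    have hmem := (eF.symm ⟨(m : ℕ) - 2 * k, by omega⟩).2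
    simp only [hFdef, Finset.mem_filter, Finset.mem_univ, true_and] at hmem
    exact hmem
  have fact3 : ∀ m m' : Fin n, (m:ℕ) < 2 * k → (m:ℕ) % 2 = 0 → (m':ℕ) = (m:ℕ) + 1 →
      ρ m' = π (ρ m) := by
    intro m m' hm hev hm'
    have hm'lt : (m':ℕ) < 2 * k := by omega
    rw [hρ_lt m hm hev, hρ_lt' m' hm'lt (by omega)]
    exact congrArg (fun z : Fin k => π ((eT.symm z : {x // x ∈ T}) : Fin n))
      (Fin.ext (by simp <;> omega))
  -- final matrices
  have cps : ∀ (g : Matrix (Fin n) (Fin n) ℂ), IsUnit g.det →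
      (∀ m j, (starRingEnd ℂ) (g m j) = g (π m) j) →
      ConjPairStructure k (g.submatrix ρe id) := by
    intro g hu hcj
    obtain ⟨hnr, hr⟩ := rowfacts g hu hcj
    refine ⟨?_, ?_, ?_⟩
    · intro m m' hm hev hm' c
      simp only [Matrix.submatrix_apply, id_eq]
      rw [hρe_apply, hρe_apply, fact3 m m' hm (Nat.even_iff.mp hev) hm', hcj]
    · intro m hm
      simp only [Matrix.submatrix_apply, id_eq]
      exact hnr (ρe m) (fact1 m hm)
    · intro m hm c
      simp only [Matrix.submatrix_apply, id_eq]
      exact hr (ρe m) (fact2 m hm) c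
  have hdet : ∀ (g : Matrix (Fin n) (Fin n) ℂ), IsUnit g.det →
      IsUnit (g.submatrix ρe id).det := by
    intro g hu
    rw [Matrix.det_permute]
    refine IsUnit.mul ?_ hu
    rcases Int.units_eq_one_or (Equiv.Perm.sign ρe) with h | h <;> simp [h]
  have hfno : ∀ (g : Matrix (Fin n) (Fin n) ℂ), FirstNonzeroOne g →
      FirstNonzeroOne (g.submatrix ρe id) := by
    intro g hg r c hc hall
    simp only [Matrix.submatrix_apply, id_eq] at hc hall ⊢
    exact hg (ρe r) c hc hall
  refine ⟨k, g₁.submatrix ρe id, g₂.submatrix ρe id, g₃.submatrix ρe id,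
    hk2, hdet _ hu₁, hdet _ hu₂, hdet _ hu₃, ?_, hfno _ hf₁, hfno _ hf₂,
    cps _ hu₁ hcj₁, cps _ hu₂ hcj₂, cps _ hu₃ hcj₃⟩
  rw [hPeq]
  funext x
  rw [act_apply, act_apply]
  simp only [Matrix.submatrix_apply, id_eq]
  exact (Equiv.sum_comp ρe (fun i => g₁ i x.1 * g₂ i x.2.1 * g₃ i x.2.2)).symm
end Tensor

namespace Tensor
variable {n : ℕ}

lemma card_filter_lt (N : ℕ) (h : N ≤ n) :
    (Finset.univ.filter (fun m : Fin n => (m:ℕ) < N)).card = N := by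
  classical
  have : (Finset.univ.filter (fun m : Fin n => (m:ℕ) < N)).card
      = (Finset.univ : Finset (Fin N)).card := by
    refine Finset.card_bij (fun a ha => (⟨(a : ℕ), by simpa using ha⟩ : Fin N)) ?_ ?_ ?_
    · intro a ha; exact Finset.mem_univ _
    · intro a ha b hb hab
      exact Fin.ext (show (a : ℕ) = (b : ℕ) from congrArg (fun z : Fin N => (z : ℕ)) hab)
    · intro b _
      exact ⟨⟨(b : ℕ), lt_of_lt_of_le b.isLt h⟩, by simp, rfl⟩
  simpa using this

lemma sig_uniq {P : Tensor n ℂ} {k k' : ℕ} {g₁ g₂ g₃ g₁' g₂' g₃' : Matrix (Fin n) (Fin n) ℂ}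
    (h : SigDecomp P k g₁ g₂ g₃) (h' : SigDecomp P k' g₁' g₂' g₃') :
    k' = k ∧ ∃ σ : Equiv.Perm (Fin n),
      (∀ m c, g₁' m c = g₁ (σ m) c) ∧ (∀ m c, g₂' m c = g₂ (σ m) c)
      ∧ (∀ m c, g₃' m c = g₃ (σ m) c) := by
  classical
  obtain ⟨hk2, hu₁, hu₂, hu₃, hPeq, hf₁, hf₂, hc₁, hc₂, hc₃⟩ := h
  obtain ⟨hk2', hu₁', hu₂', hu₃', hPeq', hf₁', hf₂', hc₁', hc₂', hc₃'⟩ := h'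
  have heq : (DT n ℂ).act g₁' g₂' g₃' = (DT n ℂ).act g₁ g₂ g₃ := by
    rw [← hPeq, ← hPeq']
  obtain ⟨π, e₁, e₂, e₃, he, hr₁, hr₂, hr₃⟩ :=
    uniq g₁ g₂ g₃ g₁' g₂' g₃' hu₁ hu₂ hu₃ hu₁' hu₂' hu₃' heq
  have he₁ : ∀ m, e₁ m = 1 := fun m => row_scale_eq_one (g₁ (π m)) (g₁' m) (e₁ m)
    (fun c => hf₁ (π m) c) (fun c => hf₁' m c) (row_ne_zero hu₁ (π m)) (he m).1
    (fun j => hr₁ m j)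
  have he₂ : ∀ m, e₂ m = 1 := fun m => row_scale_eq_one (g₂ (π m)) (g₂' m) (e₂ m)
    (fun c => hf₂ (π m) c) (fun c => hf₂' m c) (row_ne_zero hu₂ (π m)) (he m).2.1
    (fun j => hr₂ m j)
  have he₃ : ∀ m, e₃ m = 1 := fun m => by
    have hp := (he m).2.2.2
    rw [he₁ m, he₂ m, one_mul, one_mul] at hp
    exact hp
  have hrow₁ : ∀ m c, g₁' m c = g₁ (π m) c := fun m c => by
    have := hr₁ m c; rwa [he₁ m, one_mul] at this
  have hrow₂ : ∀ m c, g₂' m c = g₂ (π m) c := fun m c => by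
    have := hr₂ m c; rwa [he₂ m, one_mul] at this
  have hrow₃ : ∀ m c, g₃' m c = g₃ (π m) c := fun m c => by
    have := hr₃ m c; rwa [he₃ m, one_mul] at this
  refine ⟨?_, π, hrow₁, hrow₂, hrow₃⟩
  -- counting nonreal rows
  have hN' : Finset.univ.filter (fun m : Fin n => ¬ ∀ c, (g₃' m c).im = 0)
      = Finset.univ.filter (fun m : Fin n => (m:ℕ) < 2 * k') := by
    ext m
    simp only [Finset.mem_filter, Finset.mem_univ, true_and]
    constructor
    · intro hm
      by_contra hge
      exact hm (hc₃'.2.2 m (by omega))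
    · intro hm hall
      obtain ⟨c, hc⟩ := (hc₃'.2.1 m hm).1
      exact hc (hall c)
  have hN : Finset.univ.filter (fun m : Fin n => ¬ ∀ c, (g₃ m c).im = 0)
      = Finset.univ.filter (fun m : Fin n => (m:ℕ) < 2 * k) := by
    ext m
    simp only [Finset.mem_filter, Finset.mem_univ, true_and]
    constructor
    · intro hm
      by_contra hge
      exact hm (hc₃.2.2 m (by omega))
    · intro hm hall
      obtain ⟨c, hc⟩ := (hc₃.2.1 m hm).1
      exact hc (hall c)
  have hcardeq : (Finset.univ.filter (fun m : Fin n => ¬ ∀ c, (g₃' m c).im = 0)).card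
      = (Finset.univ.filter (fun m : Fin n => ¬ ∀ c, (g₃ m c).im = 0)).card := by
    refine Finset.card_bij (fun a _ => π a) ?_ ?_ ?_
    · intro a ha
      simp only [Finset.mem_filter, Finset.mem_univ, true_and] at ha ⊢
      intro hall
      exact ha (fun c => by rw [hrow₃ a c, hall c])
    · intro a _ b _ hab
      exact π.injective hab
    · intro b hb
      simp only [Finset.mem_filter, Finset.mem_univ, true_and] at hb ⊢
      refine ⟨π.symm b, ?_, π.apply_symm_apply b⟩
      intro hall
      refine hb (fun c => ?_)
      have := hrow₃ (π.symm b) c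
      rw [π.apply_symm_apply] at this
      rw [← this, hall c]
  rw [hN', hN, card_filter_lt _ hk2', card_filter_lt _ hk2] at hcardeq
  omega

end Tensor


/-- a real tensor `P ∈ 𝒟(ℂ)` has an expression `P = D(g₁,g₂,g₃)` normalized
as in conditions (i) and (ii), unique up to a simultaneous permutation of the rows of the
`gᵢ`. -/
theorem statement_15 (n : ℕ) (P : Tensor n ℂ) (hreal : Tensor.IsReal P)
    (hP : P ∈ Tensor.orbitD n ℂ) :
    ∃ (k : ℕ) (g₁ g₂ g₃ : Matrix (Fin n) (Fin n) ℂ),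
      Tensor.SigDecomp P k g₁ g₂ g₃ ∧
      ∀ (k' : ℕ) (g₁' g₂' g₃' : Matrix (Fin n) (Fin n) ℂ),
        Tensor.SigDecomp P k' g₁' g₂' g₃' →
        k' = k ∧ ∃ σ : Equiv.Perm (Fin n),
          (∀ m c, g₁' m c = g₁ (σ m) c) ∧ (∀ m c, g₂' m c = g₂ (σ m) c)
          ∧ (∀ m c, g₃' m c = g₃ (σ m) c) := by
  obtain ⟨k, g₁, g₂, g₃, hsig⟩ := Tensor.exists_sig P hreal hP
  exact ⟨k, g₁, g₂, g₃, hsig, fun k' g₁' g₂' g₃' hsig' => Tensor.sig_uniq hsig hsig'⟩
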